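/- A binary word C is central if and only if the words 0C1 and 1C0 are conjugates. -/

import Mathlib

/-- A word is primitive if it is not a proper power: `w = v^n` implies `n = 1`. -/
def Primitive {α : Type*} (w : List α) : Prop :=
  ∀ (v : List α) (n : ℕ), w = (List.replicate n v).flatten → n = 1

/-- A Lyndon word: nonempty and lexicographically strictly smaller than all
its proper nonempty suffixes. -/
def Lyndon {α : Type*} [LinearOrder α] (w : List α) : Prop :=
  w ≠ [] ∧ ∀ u v : List α, w = u ++ v → u ≠ [] → v ≠ [] → List.Lex (· < ·) w v

/-- A Lyndon word for the reversed order `1 < 0` on `Bool`. -/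
def LyndonRev (w : List Bool) : Prop :=
  w ≠ [] ∧ ∀ u v : List Bool, w = u ++ v → u ≠ [] → v ≠ [] → List.Lex (· > ·) w v

/-- A binary word is balanced if the numbers of `1`s in any two factors of the
same length differ by at most 1. (`false` plays the role of `0`, `true` of `1`.) -/
def Balanced01 (w : List Bool) : Prop :=
  ∀ u v : List Bool, u <:+: w → v <:+: w → u.length = v.length →
    (u.count true : ℤ) - (v.count true : ℤ) ≤ 1

/-- `w` has period `p`: `w[i] = w[i+p]` for all valid indices. -/
def HasPeriod (w : List Bool) (p : ℕ) : Prop :=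
  ∀ i : ℕ, i + p < w.length → w[i]? = w[i + p]?

/-- A central word: it has coprime periods `p`, `q` and length `p + q - 2`. -/
def Central (w : List Bool) : Prop :=
  ∃ p q : ℕ, Nat.Coprime p q ∧ HasPeriod w p ∧ HasPeriod w q ∧ w.length + 2 = p + q

/-- The lower Christoffel word of slope `b/a`: letter `i` is `1` (`true`) iff the
line `y = bx/(a+b)`... encoded via floor differences `⌊(i+1)b/(a+b)⌋ - ⌊ib/(a+b)⌋`. -/
def chr (a b : ℕ) : List Bool :=
  List.ofFn (fun i : Fin (a + b) =>
    decide ((i : ℕ) * b / (a + b) < ((i : ℕ) + 1) * b / (a + b)))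

/-- An (upward) digitally convex word: all factors of its Lyndon factorization
(for the order `0 < 1`) are balanced Lyndon words, i.e. primitive lower
Christoffel words. -/
def DC (w : List Bool) : Prop :=
  ∃ L : List (List Bool), L.flatten = w ∧ (∀ x ∈ L, Lyndon x ∧ Balanced01 x) ∧
    L.Chain' (fun a b => ¬ List.Lex (· < ·) a b)

/-- A downward digitally convex word: all factors of its Lyndon factorization
for the order `1 < 0` are balanced. -/
def DCdown (w : List Bool) : Prop :=
  ∃ L : List (List Bool), L.flatten = w ∧ (∀ x ∈ L, LyndonRev x ∧ Balanced01 x) ∧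
    L.Chain' (fun a b => ¬ List.Lex (· > ·) a b)

/-- `(u, v)` is the standard factorization of `u ++ v`: both parts nonempty and
`v` is the lexicographically least proper nonempty suffix of `u ++ v`. -/
def StdFact (u v : List Bool) : Prop :=
  u ≠ [] ∧ v ≠ [] ∧
    ∀ s : List Bool, s ≠ [] → s ≠ u ++ v → s <:+ u ++ v →
      s = v ∨ List.Lex (· < ·) v s

/-- A word is unbordered if it has no nonempty proper border. -/
def Unbordered (w : List Bool) : Prop :=
  ∀ u : List Bool, u <+: w → u <:+ w → u ≠ w → u = []

namespace Stmt5Aux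


def Rel (a : Bool) (P Q C : List Bool) : Prop :=
  C = P ++ a :: (!a) :: Q ∧ C = Q ++ (!a) :: a :: P

lemma Rel.swap {a : Bool} {P Q C : List Bool} (h : Rel a P Q C) : Rel (!a) Q P C := by
  obtain ⟨h1, h2⟩ := h
  exact ⟨by simpa using h2, by simpa using h1⟩

lemma Rel.len {a : Bool} {P Q C : List Bool} (h : Rel a P Q C) :
    C.length = P.length + Q.length + 2 := by
  rw [h.1]; simp; omega

lemma rel_coprime_aux : ∀ (n : ℕ) (a : Bool) (P Q C : List Bool), C.length ≤ n →
    Rel a P Q C → P.length ≤ Q.length → Nat.Coprime (P.length + 2) (Q.length + 2) := by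
  intro n
  induction n with
  | zero =>
    intro a P Q C hle h _
    have := h.len; omega
  | succ n IH =>
    intro a P Q C hle h hPQ
    rcases eq_or_lt_of_le hPQ with heq | hlt
    · -- |P| = |Q| : contradiction
      exfalso
      obtain ⟨h1, h2⟩ := h
      have h3 : P ++ a :: (!a) :: Q = Q ++ (!a) :: a :: P := h1.symm.trans h2
      obtain ⟨hPQ', hrest⟩ := List.append_inj h3 heq
      cases a <;> simp_all
    · rcases eq_or_lt_of_le (Nat.succ_le_of_lt hlt) with heq1 | hge
      · -- |Q| = |P| + 1
        have : Q.length + 2 = 1 + (P.length + 2) := by omega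
        rw [this]
        exact Nat.coprime_add_self_right.mpr (Nat.coprime_one_right _)
      · -- |Q| ≥ |P| + 2
        obtain ⟨h1, h2⟩ := h
        have hge' : P.length + 2 ≤ Q.length := hge
        obtain ⟨k, hk⟩ : ∃ k, Q.length - P.length = k + 2 := ⟨Q.length - P.length - 2, by omega⟩
        have e1 : C.take Q.length = Q := by rw [h2]; exact List.take_left
        have e2 : C.take Q.length = P ++ a :: (!a) :: Q.take k := by
          rw [h1, List.take_append, List.take_of_length_le (by omega), hk]
          simp
        have hQeq : Q = P ++ a :: (!a) :: Q.take k := e1.symm.trans e2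
        have h4 : Q = Q.take k ++ (!a) :: a :: P := by
          have h3 : P ++ a :: (!a) :: Q = Q ++ (!a) :: a :: P := h1.symm.trans h2
          conv_rhs at h3 => rw [hQeq]
          have h5 : P ++ a :: (!a) :: Q = P ++ a :: (!a) :: (Q.take k ++ (!a) :: a :: P) := by
            simpa [List.append_assoc] using h3
          have := List.append_cancel_left h5
          simpa using this
        have hrel' : Rel a P (Q.take k) Q := ⟨hQeq, h4⟩
        have hkl : (Q.take k).length = k := by
          simp [List.length_take]; omega
        have hQn : Q.length ≤ n := by have := Rel.len ⟨h1, h2⟩; omega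
        have hcop : Nat.Coprime (P.length + 2) ((Q.take k).length + 2) := by
          rcases le_total P.length (Q.take k).length with hle' | hle'
          · exact IH a P (Q.take k) Q hQn hrel' hle'
          · exact (IH (!a) (Q.take k) P Q hQn hrel'.swap hle').symm
        have hsum : Q.length + 2 = ((Q.take k).length + 2) + (P.length + 2) := by
          rw [hkl]; omega
        rw [hsum]
        exact Nat.coprime_add_self_right.mpr hcop

lemma rel_coprime {a : Bool} {P Q C : List Bool} (h : Rel a P Q C) :
    Nat.Coprime (P.length + 2) (Q.length + 2) := by
  rcases le_total P.length Q.length with hle | hle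
  · exact rel_coprime_aux C.length a P Q C le_rfl h hle
  · exact (rel_coprime_aux C.length (!a) Q P C le_rfl h.swap hle).symm

lemma hasPeriod_iff {C : List Bool} {p : ℕ} :
    HasPeriod C p ↔ C.drop p = C.take (C.length - p) := by
  constructor
  · intro h
    apply List.ext_getElem?
    intro i
    rw [List.getElem?_drop, List.getElem?_take]
    by_cases hi : i < C.length - p
    · rw [if_pos hi, Nat.add_comm]
      exact (h i (by omega)).symm
    · rw [if_neg hi]
      exact List.getElem?_eq_none (by omega)
  · intro h i hip
    have h2 := congrArg (fun l => l[i]?) h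
    simp only [List.getElem?_drop, List.getElem?_take] at h2
    rw [if_pos (by omega)] at h2
    rw [Nat.add_comm] at h2
    exact h2.symm

lemma eq_replicate_of_period_one {C : List Bool} (h : HasPeriod C 1) :
    ∃ c, C = List.replicate C.length c := by
  rcases C with _ | ⟨c, t⟩
  · exact ⟨false, rfl⟩
  · refine ⟨c, List.ext_getElem? fun i => ?_⟩
    rw [List.getElem?_replicate]
    have key : ∀ i, i < (c :: t).length → (c :: t)[i]? = some c := by
      intro i
      induction i with
      | zero => intro _; simp
      | succ j IHj =>
        intro hj
        have hper := h j (by omega)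
        rw [← hper]
        exact IHj (by omega)
    by_cases hi : i < (c :: t).length
    · rw [if_pos hi]; exact key i hi
    · rw [if_neg hi]; exact List.getElem?_eq_none (by omega)

lemma central_struct : ∀ (q p : ℕ) (C : List Bool), p ≤ q → 1 ≤ p → Nat.Coprime p q →
    C.drop p = C.take (C.length - p) → C.drop q = C.take (C.length - q) →
    C.length + 2 = p + q →
    (∃ c, C = List.replicate C.length c) ∨
      (∃ a P Q, Rel a P Q C ∧ P.length + 2 = p ∧ Q.length + 2 = q) := by
  intro q
  induction q using Nat.strong_induction_on with
  | _ q IH =>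
  intro p C hpq hp hcop hperp hperq hlen
  by_cases hp1 : p = 1
  · subst hp1
    exact Or.inl (eq_replicate_of_period_one (hasPeriod_iff.mpr hperp))
  · have hp2 : 2 ≤ p := by omega
    have hplq : p < q := by
      rcases eq_or_lt_of_le hpq with h | h
      · exfalso; apply hp1
        rw [← h] at hcop
        simpa [Nat.Coprime] using hcop
      · exact h
    set u := C.drop p with hu
    have hCl : C.length - p = q - 2 := by omega
    have huT : u = C.take (q - 2) := by rw [hCl] at hperp; exact hperp
    have hulen : u.length = q - 2 := by rw [hu]; simp [List.length_drop]; omega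
    have hu_p : u.drop p = u.take (u.length - p) := by
      conv_lhs => rw [huT]
      rw [List.drop_take, ← hu, hulen]
    have hu_qp : u.drop (q - p) = u.take (u.length - (q - p)) := by
      have l1 : u.drop (q - p) = C.take (p - 2) := by
        rw [hu, List.drop_drop, show p + (q - p) = q by omega, hperq,
          show C.length - q = p - 2 by omega]
      have l2 : u.take (u.length - (q - p)) = C.take (p - 2) := by
        rw [hulen, show q - 2 - (q - p) = p - 2 by omega, huT, List.take_take,
          Nat.min_eq_left (by omega)]
      rw [l1, l2]
    have hcop' : Nat.Coprime p (q - p) :=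
      (Nat.coprime_sub_self_right (by omega)).mpr hcop
    have hulen2 : u.length + 2 = p + (q - p) := by omega
    have hres' : (∃ c, u = List.replicate u.length c) ∨
        (∃ a P Q0, Rel a P Q0 u ∧ P.length + 2 = p ∧ Q0.length + 2 = q - p) := by
      rcases le_or_gt p (q - p) with hc | hc
      · exact IH (q - p) (by omega) p u hc hp hcop' hu_p hu_qp hulen2
      · rcases IH p hplq (q - p) u (le_of_lt hc) (by omega) hcop'.symm hu_qp hu_p
          (by omega) with hconst | ⟨a, P, Q0, hrel, hl1, hl2⟩
        · exact Or.inl hconst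
        · exact Or.inr ⟨!a, Q0, P, hrel.swap, hl2, hl1⟩
    rcases hres' with ⟨c, hcu⟩ | ⟨a, P, Q0, ⟨hr1, hr2⟩, hl1, hl2⟩
    · -- u constant
      rcases le_or_gt p (q - 2) with hple | hplt
      · left
        refine ⟨c, ?_⟩
        have hcu' : u = List.replicate (q - 2) c := by rw [hcu, hulen]
        have htp : C.take p = List.replicate p c := by
          have h1 : C.take p = u.take p := by
            rw [huT, List.take_take, Nat.min_eq_left hple]
          rw [h1, hcu', List.take_replicate]
          congr 1
          exact Nat.min_eq_left hple
        have hfin : C.length = p + (q - 2) := by omega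
        calc C = C.take p ++ C.drop p := (List.take_append_drop p C).symm
          _ = List.replicate p c ++ List.replicate (q - 2) c := by
              rw [htp, ← hu, hcu']
          _ = List.replicate (p + (q - 2)) c := (List.replicate_add _ _ _).symm
          _ = List.replicate C.length c := by rw [hfin]
      · -- q = p + 1
        have hq1 : q = p + 1 := by omega
        have hCt : C.take (p - 1) = u := by rw [huT]; congr 1; omega
        have hvlen : (C.drop (p - 1)).length = p := by
          simp [List.length_drop]; omega
        obtain ⟨d, v', hv⟩ : ∃ d v', C.drop (p - 1) = d :: v' := by
          cases hC : C.drop (p - 1) with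
          | nil => rw [hC] at hvlen; simp at hvlen; omega
          | cons d v' => exact ⟨d, v', rfl⟩
        have hv' : v' = u := by
          have h1 : (C.drop (p - 1)).drop 1 = v' := by rw [hv]; rfl
          rw [List.drop_drop, show p - 1 + 1 = p by omega] at h1
          rw [← h1, hu]
        have hC : C = u ++ d :: u := by
          conv_lhs => rw [← List.take_append_drop (p - 1) C]
          rw [hCt, hv, hv']
        have hcu' : u = List.replicate (q - 2) c := by rw [hcu, hulen]
        by_cases hd : d = c
        · left
          refine ⟨c, ?_⟩
          have hLen : C.length = (q - 2) + ((q - 2) + 1) := by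
            rw [hC]; simp; omega
          rw [hLen, hC, hcu', hd, List.replicate_add, List.replicate_succ]
        · right
          have hd' : d = !c := Bool.eq_not_of_ne hd
          refine ⟨c, List.replicate (p - 2) c, u, ⟨?_, ?_⟩, ?_, by omega⟩
          · -- C = replicate (p-2) c ++ c :: (!c) :: u
            rw [hC, hcu', hd', show q - 2 = (p - 2) + 1 by omega,
              List.replicate_succ']
            simp
          · -- C = u ++ (!c) :: c :: replicate (p-2) c
            rw [hC, hd', hcu', show q - 2 = (p - 2) + 1 by omega,
              List.replicate_succ]
          · simp only [List.length_replicate]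
            omega
    · -- Rel branch
      right
      have hqp2 : 2 ≤ q - p := by omega
      refine ⟨a, P, u, ⟨?_, ?_⟩, hl1, by omega⟩
      · have htp : C.take p = P ++ [a, !a] := by
          have h1 : C.take p = u.take p := by
            rw [huT, List.take_take, Nat.min_eq_left (by omega)]
          rw [h1, hr1, List.take_append,
            List.take_of_length_le (by omega), show p - P.length = 2 by omega]
          simp
        conv_lhs => rw [← List.take_append_drop p C]
        rw [htp, ← hu]
        simp
      · have hC2 : C = P ++ a :: (!a) :: u := by
          have htp : C.take p = P ++ [a, !a] := by
            have h1 : C.take p = u.take p := by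
              rw [huT, List.take_take, Nat.min_eq_left (by omega)]
            rw [h1, hr1, List.take_append,
              List.take_of_length_le (by omega), show p - P.length = 2 by omega]
            simp
          conv_lhs => rw [← List.take_append_drop p C]
          rw [htp, ← hu]
          simp
        rw [hC2]
        conv_lhs => rw [hr2]
        rw [hr1]
        simp


lemma rep_aux : ∀ (l : List Bool) (a : Bool), l ++ [a] = a :: l → l = List.replicate l.length a
  | [], _, _ => rfl
  | b :: t, a, h => by
    rw [List.cons_append] at h
    injection h with h1 h2
    subst h1
    have ht := rep_aux t b h2
    rw [List.length_cons, List.replicate_succ]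
    exact congrArg (List.cons b) ht

lemma central_replicate (k : ℕ) (c : Bool) : Central (List.replicate k c) := by
  refine ⟨1, k + 1, Nat.coprime_one_left _, ?_, ?_, by simp only [List.length_replicate]; omega⟩
  · intro i hi
    simp only [List.length_replicate] at hi
    rw [List.getElem?_replicate, List.getElem?_replicate, if_pos (by omega), if_pos (by omega)]
  · intro i hi
    simp only [List.length_replicate] at hi
    omega

lemma central_of_rel {a : Bool} {P Q C : List Bool} (h : Rel a P Q C) : Central C := by
  obtain ⟨h1, h2⟩ := h
  have hlen : C.length = P.length + Q.length + 2 := Rel.len ⟨h1, h2⟩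
  refine ⟨P.length + 2, Q.length + 2, rel_coprime ⟨h1, h2⟩, ?_, ?_, by omega⟩
  · rw [hasPeriod_iff]
    have d : C.drop (P.length + 2) = Q := by
      rw [h1, show P ++ a :: (!a) :: Q = (P ++ [a, !a]) ++ Q by simp,
        List.drop_left' (by simp)]
    have t : C.take (C.length - (P.length + 2)) = Q := by
      rw [show C.length - (P.length + 2) = Q.length by omega, h2, List.take_left]
    rw [d, t]
  · rw [hasPeriod_iff]
    have d : C.drop (Q.length + 2) = P := by
      rw [h2, show Q ++ (!a) :: a :: P = (Q ++ [!a, a]) ++ P by simp,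
        List.drop_left' (by simp)]
    have t : C.take (C.length - (Q.length + 2)) = P := by
      rw [show C.length - (Q.length + 2) = P.length by omega, h1, List.take_left]
    rw [d, t]

lemma conj_of_central {C : List Bool} (h : Central C) :
    ∃ x y : List Bool, false :: (C ++ [true]) = x ++ y ∧ true :: (C ++ [false]) = y ++ x := by
  obtain ⟨p, q, hcop, hp, hq, hlen⟩ := h
  have hstruct : (∃ k c, C = List.replicate k c) ∨ (∃ a P Q, Rel a P Q C) := by
    have key : ∀ p q : ℕ, Nat.Coprime p q → HasPeriod C p → HasPeriod C q →
        C.length + 2 = p + q → p ≤ q →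
        (∃ k c, C = List.replicate k c) ∨ (∃ a P Q, Rel a P Q C) := by
      intro p q hcop hp hq hlen hpq
      have hp1 : 1 ≤ p := by
        rcases Nat.eq_zero_or_pos p with h0 | h1
        · exfalso
          rw [h0] at hcop hlen
          have := (Nat.coprime_zero_left q).mp hcop
          omega
        · exact h1
      rcases central_struct q p C hpq hp1 hcop (hasPeriod_iff.mp hp)
          (hasPeriod_iff.mp hq) hlen with ⟨c, hc⟩ | ⟨a, P, Q, hr, _, _⟩
      · exact Or.inl ⟨C.length, c, hc⟩
      · exact Or.inr ⟨a, P, Q, hr⟩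
    rcases le_total p q with hpq | hpq
    · exact key p q hcop hp hq hlen hpq
    · exact key q p hcop.symm hq hp (by omega) hpq
  rcases hstruct with ⟨k, c, hC⟩ | ⟨a, P, Q, h1, h2⟩
  · cases c
    · refine ⟨false :: C, [true], by simp, ?_⟩
      have h0 : C ++ [false] = false :: C := by
        rw [hC, ← List.replicate_succ', ← List.replicate_succ]
      rw [h0]
      simp
    · refine ⟨[false], true :: C, ?_, by simp⟩
      have h0 : C ++ [true] = true :: C := by
        rw [hC, ← List.replicate_succ', ← List.replicate_succ]
      rw [h0]
      simp
  · cases a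
    · simp only [Bool.not_false] at h1 h2
      refine ⟨false :: (P ++ [false]), true :: (Q ++ [true]), ?_, ?_⟩
      · rw [h1]; simp
      · rw [h2]; simp
    · simp only [Bool.not_true] at h1 h2
      refine ⟨false :: (Q ++ [false]), true :: (P ++ [true]), ?_, ?_⟩
      · rw [h2]; simp
      · rw [h1]; simp

lemma central_of_conj {C : List Bool}
    (h : ∃ x y : List Bool,
      false :: (C ++ [true]) = x ++ y ∧ true :: (C ++ [false]) = y ++ x) :
    Central C := by
  obtain ⟨x, y, hxy, hyx⟩ := h
  rcases x with _ | ⟨xh, x'⟩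
  · rw [List.nil_append] at hxy
    rw [List.append_nil] at hyx
    rw [← hxy] at hyx
    simp at hyx
  rcases y with _ | ⟨yh, y'⟩
  · rw [List.append_nil] at hxy
    rw [List.nil_append] at hyx
    rw [← hyx] at hxy
    simp at hxy
  rw [List.cons_append] at hxy hyx
  injection hxy with hx1 hx2
  injection hyx with hy1 hy2
  subst hx1
  subst hy1
  by_cases hx' : x' = []
  · subst hx'
    simp only [List.nil_append] at hx2
    obtain ⟨hCy, -⟩ := List.append_inj' hy2 rfl
    rw [← hCy] at hx2
    have := rep_aux C true hx2
    rw [this]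
    exact central_replicate _ _
  by_cases hy' : y' = []
  · subst hy'
    simp only [List.nil_append] at hy2
    obtain ⟨hCx, -⟩ := List.append_inj' hx2 rfl
    rw [← hCx] at hy2
    have := rep_aux C false hy2
    rw [this]
    exact central_replicate _ _
  · obtain ⟨P, b, hPb⟩ : ∃ P b, x' = P ++ [b] :=
      ⟨x'.dropLast, x'.getLast hx', (List.dropLast_append_getLast hx').symm⟩
    obtain ⟨Q, e, hQe⟩ : ∃ Q e, y' = Q ++ [e] :=
      ⟨y'.dropLast, y'.getLast hy', (List.dropLast_append_getLast hy').symm⟩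
    subst hPb
    subst hQe
    have hx3 : C ++ [true] = (P ++ b :: true :: Q) ++ [e] := by
      rw [hx2]; simp
    have hy3 : C ++ [false] = (Q ++ e :: false :: P) ++ [b] := by
      rw [hy2]; simp
    obtain ⟨hC1, he⟩ := List.append_inj' hx3 rfl
    obtain ⟨hC2, hb⟩ := List.append_inj' hy3 rfl
    injection he with he' hee
    injection hb with hb' hbb
    subst he'
    subst hb'
    exact central_of_rel (a := false) ⟨by simpa using hC1, by simpa using hC2⟩

end Stmt5Aux

/-- `C` is central iff `0C1` and `1C0` are conjugates. -/
theorem stmt5 (C : List Bool) :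
    Central C ↔ ∃ x y : List Bool,
      false :: (C ++ [true]) = x ++ y ∧ true :: (C ++ [false]) = y ++ x :=
  ⟨Stmt5Aux.conj_of_central, Stmt5Aux.central_of_conj⟩
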